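/- Let A(0) and A(1) be the 3×3 matrices with rows (1,0,0),(0,1,0),(1,1,0) and (1,0,1),(0,1,1),(0,0,1) respectively, and let U := (1,1,1)^T. Then for every y ∈ {0,1}^ℕ and n ≥ 1 the vector A(y_1)⋯A(y_n)U is nonzero, and the continuous maps Π_n(·,U) : {0,1}^ℕ → S_3, Π_n(y,U) := A(y_1)⋯A(y_n)U/‖A(y_1)⋯A(y_n)U‖, converge uniformly on {0,1}^ℕ to a limit map V : {0,1}^ℕ → S_3 as n → +∞. -/

import Mathlib

open Matrix Filter Finset Topology MeasureTheory

/-- ℓ¹-norm (sum of absolute values of the entries) of a vector. -/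
noncomputable def l1 {d : ℕ} (v : Fin d → ℝ) : ℝ := ∑ i, |v i|

/-- Normalization of a vector by its ℓ¹-norm. -/
noncomputable def nrm {d : ℕ} (v : Fin d → ℝ) : Fin d → ℝ := (l1 v)⁻¹ • v

/-- Probability vector: nonnegative entries summing to `1`. -/
def probVec {d : ℕ} (X : Fin d → ℝ) : Prop := (∀ i, 0 ≤ X i) ∧ ∑ i, X i = 1

/-- `A(ω_1 ⋯ ω_n) = A(ω_1) * ⋯ * A(ω_n)`. -/
noncomputable def wordProd {d a : ℕ} (A : Fin (a + 1) → Matrix (Fin d) (Fin d) ℝ)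
    (ω : ℕ → Fin (a + 1)) (n : ℕ) : Matrix (Fin d) (Fin d) ℝ :=
  ((List.range n).map fun k => A (ω k)).prod

/-- `Ω_R` : the set of sequences `ω` such that `A(ω_1⋯ω_n) R ≠ 0` for every `n ≥ 1`. -/
def OmegaR {d a : ℕ} (A : Fin (a + 1) → Matrix (Fin d) (Fin d) ℝ) (R : Fin d → ℝ) :
    Set (ℕ → Fin (a + 1)) :=
  {ω | ∀ n, 1 ≤ n → wordProd A ω n *ᵥ R ≠ 0}

/-- The two 3×3 matrices of the Kamae measure: `A(0)` and `A(1)`. -/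
noncomputable def kamaeA : Fin 2 → Matrix (Fin 3) (Fin 3) ℝ :=
  ![!![1, 0, 0; 0, 1, 0; 1, 1, 0], !![1, 0, 1; 0, 1, 1; 0, 0, 1]]



/-- the ratio map iterated: `Tm n y s = f_{y 0} (f_{y 1} (⋯ f_{y (n-1)} s))` with
`f_0 ≡ 2`, `f_1 t = t/(1+t)`. -/
noncomputable def Tm : ℕ → (ℕ → Fin 2) → ℝ → ℝ
  | 0, _, s => s
  | n+1, y, s => if y 0 = 0 then 2 else
      (Tm n (fun k => y (k+1)) s) / (1 + Tm n (fun k => y (k+1)) s)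

lemma Tm_range (n : ℕ) (y : ℕ → Fin 2) (s : ℝ) (h0 : 0 ≤ s) (h2 : s ≤ 2) :
    0 ≤ Tm n y s ∧ Tm n y s ≤ 2 := by
  induction n generalizing y with
  | zero => exact ⟨h0, h2⟩
  | succ n ih =>
    rw [Tm]
    split
    · norm_num
    · obtain ⟨h0', h2'⟩ := ih (fun k => y (k+1))
      constructor
      · positivity
      · rw [div_le_iff₀ (by linarith)]; linarith

lemma Tm_const (n : ℕ) (y : ℕ → Fin 2) (h : ∃ k < n, y k = 0) (s s' : ℝ) :
    Tm n y s = Tm n y s' := by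
  induction n generalizing y with
  | zero => obtain ⟨k, hk, _⟩ := h; omega
  | succ n ih =>
    rw [Tm, Tm]
    split
    · rfl
    · rename_i h0
      obtain ⟨k, hk, hy⟩ := h
      have hk0 : k ≠ 0 := fun e => h0 (e ▸ hy)
      rw [ih (fun k => y (k+1)) ⟨k - 1, by omega, by show y (k-1+1) = 0; rwa [Nat.sub_add_cancel (by omega)]⟩]

lemma Tm_ones (n : ℕ) (y : ℕ → Fin 2) (h : ∀ k < n, y k = 1) (s : ℝ) (h0 : 0 ≤ s) :
    Tm n y s = s / (1 + n * s) := by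
  induction n generalizing y with
  | zero => simp [Tm]
  | succ n ih =>
    rw [Tm, if_neg (by simp [h 0 (by omega)])]
    rw [ih (fun k => y (k+1)) (fun k hk => h (k+1) (by omega))]
    have h1 : (0:ℝ) < 1 + n * s := by positivity
    have h2 : (0:ℝ) < 1 + (n+1) * s := by positivity
    have h3 : 1 + s / (1 + (n:ℝ) * s) = (1 + ((n:ℝ)+1) * s) / (1 + n * s) := by
      field_simp; ring
    rw [h3]
    rw [div_div_div_eq]
    rw [div_eq_div_iff (by positivity) (by positivity)]
    push_cast
    ring

lemma Tm_contract (n : ℕ) (y : ℕ → Fin 2) (s s' : ℝ)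
    (h0 : 0 ≤ s) (h2 : s ≤ 2) (h0' : 0 ≤ s') (h2' : s' ≤ 2) (hn : 1 ≤ n) :
    |Tm n y s - Tm n y s'| ≤ 1 / n := by
  by_cases h : ∃ k < n, y k = 0
  · rw [Tm_const n y h s s', sub_self, abs_zero]; positivity
  · push_neg at h
    have h' : ∀ k < n, y k = 1 := by
      intro k hk; have := h k hk; omega
    rw [Tm_ones n y h' s h0, Tm_ones n y h' s' h0']
    have hn' : (1:ℝ) ≤ n := by exact_mod_cast hn
    have b1 : ∀ u : ℝ, 0 ≤ u → 0 ≤ u / (1 + n * u) ∧ u / (1 + n * u) ≤ 1 / n := by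
      intro u hu
      have hd : (0:ℝ) < 1 + n * u := by positivity
      constructor
      · positivity
      · rw [div_le_div_iff₀ hd (by linarith)]; nlinarith
    obtain ⟨a1, a2⟩ := b1 s h0
    obtain ⟨c1, c2⟩ := b1 s' h0'
    rw [abs_sub_le_iff]
    constructor <;> linarith

lemma Tm_comp (n k : ℕ) (y : ℕ → Fin 2) (s : ℝ) :
    Tm (n + k) y s = Tm n y (Tm k (fun j => y (j + n)) s) := by
  induction n generalizing y with
  | zero => rw [Nat.zero_add]; rfl
  | succ n ih =>
    have e : n + 1 + k = (n + k) + 1 := by omega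
    rw [e, Tm, Tm]
    split
    · rfl
    · rw [ih (fun j => y (j+1))]; rfl

/-- scale factor -/
noncomputable def av : ℕ → (ℕ → Fin 2) → ℝ
  | 0, _ => 1
  | n+1, y => if y 0 = 0 then av n (fun k => y (k+1))
      else av n (fun k => y (k+1)) * (1 + Tm n (fun k => y (k+1)) 1)

lemma av_pos (n : ℕ) (y : ℕ → Fin 2) : 0 < av n y := by
  induction n generalizing y with
  | zero => norm_num [av]
  | succ n ih =>
    rw [av]
    have h := (Tm_range n (fun k => y (k+1)) 1 (by norm_num) (by norm_num)).1
    split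
    · exact ih _
    · have := ih (fun k => y (k+1)); nlinarith

lemma key_vec (n : ℕ) (y : ℕ → Fin 2) :
    wordProd kamaeA y n *ᵥ (fun _ => (1:ℝ)) =
      fun i => av n y * (if i = 2 then Tm n y 1 else 1) := by
  induction n generalizing y with
  | zero =>
    funext i
    fin_cases i <;>
      simp [wordProd, av, Tm, Matrix.mulVec, dotProduct, Fin.sum_univ_three,
        Matrix.one_apply]
  | succ n ih =>
    have hw : wordProd kamaeA y (n+1) = kamaeA (y 0) * wordProd kamaeA (fun k => y (k+1)) n := by
      simp [wordProd, List.range_succ_eq_map, Function.comp_def]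
    rw [hw, ← Matrix.mulVec_mulVec, ih (fun k => y (k+1))]
    have ht := Tm_range n (fun k => y (k+1)) 1 (by norm_num) (by norm_num)
    have ha := av_pos n (fun k => y (k+1))
    set t := Tm n (fun k => y (k+1)) 1 with htdef
    set a := av n (fun k => y (k+1)) with hadef
    have hy : y 0 = 0 ∨ y 0 = 1 := by omega
    funext i
    rcases hy with hy | hy
    · rw [av, Tm, if_pos hy, if_pos hy, ← hadef]
      fin_cases i <;>
        simp [kamaeA, hy, Matrix.mulVec, dotProduct, Fin.sum_univ_three] <;> ring
    · have hy' : ¬ (y 0 = 0) := by rw [hy]; decide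
      rw [av, Tm, if_neg hy', if_neg hy', ← htdef, ← hadef]
      have h1t : (1:ℝ) + t ≠ 0 := by linarith [ht.1]
      fin_cases i <;>
        (try simp [kamaeA, hy, Matrix.mulVec, dotProduct, Fin.sum_univ_three]) <;>
        (try field_simp) <;> (try ring)


lemma nrm_key (n : ℕ) (y : ℕ → Fin 2) :
    nrm (wordProd kamaeA y n *ᵥ fun _ => (1:ℝ)) =
      fun i => if i = 2 then Tm n y 1 / (2 + Tm n y 1) else 1 / (2 + Tm n y 1) := by
  rw [key_vec]
  have ht := Tm_range n y 1 (by norm_num) (by norm_num)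
  have ha := av_pos n y
  set t := Tm n y 1
  set a := av n y
  have h2t : (0:ℝ) < 2 + t := by linarith [ht.1]
  have hl1 : l1 (fun i : Fin 3 => a * if i = 2 then t else 1) = a * (2 + t) := by
    rw [l1, Fin.sum_univ_three]
    rw [if_neg (by decide : ¬((0:Fin 3) = 2)), if_neg (by decide : ¬((1:Fin 3) = 2)),
      if_pos rfl]
    rw [mul_one, abs_of_pos ha, abs_of_nonneg (by nlinarith [ht.1] : (0:ℝ) ≤ a * t)]
    ring
  rw [nrm, hl1]
  funext i
  simp only [Pi.smul_apply, smul_eq_mul]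
  by_cases hi : i = 2
  · simp only [hi, if_true]
    rw [eq_div_iff (ne_of_gt h2t), mul_inv]
    field_simp
    try ring
  · simp only [if_neg hi, mul_one]
    rw [mul_inv, mul_comm ((a)⁻¹), mul_assoc, inv_mul_cancel₀ (ne_of_gt ha), mul_one,
      one_div]

lemma t_bound (n m : ℕ) (hn : 1 ≤ n) (hnm : n ≤ m) (y : ℕ → Fin 2) :
    |Tm m y 1 - Tm n y 1| ≤ 1 / n := by
  have e : m = n + (m - n) := by omega
  rw [e, Tm_comp]
  have hr := Tm_range (m - n) (fun j => y (j + n)) 1 (by norm_num) (by norm_num)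
  exact Tm_contract n y _ 1 hr.1 hr.2 (by norm_num) (by norm_num) hn

lemma coord_bound (t t' : ℝ) (h0 : 0 ≤ t) (h0' : 0 ≤ t') :
    |1/(2+t) - 1/(2+t')| ≤ |t - t'| ∧ |t/(2+t) - t'/(2+t')| ≤ |t - t'| := by
  have d2 : (0:ℝ) < 2 + t := by linarith
  have d2' : (0:ℝ) < 2 + t' := by linarith
  have hd : (4:ℝ) ≤ (2+t)*(2+t') := by nlinarith
  have hdpos : (0:ℝ) < (2+t)*(2+t') := by positivity
  constructor
  · have e1 : 1/(2+t) - 1/(2+t') = (t'-t)/((2+t)*(2+t')) := by field_simp; try ring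
    rw [e1, abs_div, abs_of_pos hdpos, abs_sub_comm]
    exact div_le_self (abs_nonneg _) (by linarith)
  · have e2 : t/(2+t) - t'/(2+t') = (2*(t-t'))/((2+t)*(2+t')) := by field_simp; try ring
    rw [e2, abs_div, abs_of_pos hdpos, abs_mul, abs_two]
    rw [div_le_iff₀ hdpos]
    nlinarith [abs_nonneg (t - t')]

/-- **Proposition 7.1.** For every binary sequence `y` and `n ≥ 1` the vector
`A(y_1)⋯A(y_n)·U` (with `U = (1,1,1)ᵀ`) is nonzero, and the normalized vectors
`Π_n(y,U)` converge uniformly on `{0,1}^ℕ` to a limit map with values in `S_3`. -/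
theorem kamae_uniform_convergence :
    (∀ (y : ℕ → Fin 2) (n : ℕ), 1 ≤ n → wordProd kamaeA y n *ᵥ (fun _ => (1 : ℝ)) ≠ 0) ∧
    ∃ V : (ℕ → Fin 2) → (Fin 3 → ℝ), (∀ y, probVec (V y)) ∧
      TendstoUniformly (fun n y => nrm (wordProd kamaeA y n *ᵥ fun _ => (1 : ℝ))) V
        atTop := by
  have hnz : ∀ (y : ℕ → Fin 2) (n : ℕ), wordProd kamaeA y n *ᵥ (fun _ => (1:ℝ)) ≠ 0 := by
    intro y n h
    have h0 := congrFun h 0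
    rw [key_vec] at h0
    simp only [Pi.zero_apply] at h0
    rw [if_neg (by decide : ¬((0:Fin 3) = 2)), mul_one] at h0
    exact absurd h0 (ne_of_gt (av_pos n y))
  refine ⟨fun y n _ => hnz y n, ?_⟩
  have hrange : ∀ (n : ℕ) (y : ℕ → Fin 2), 0 ≤ Tm n y 1 ∧ Tm n y 1 ≤ 2 := fun n y =>
    Tm_range n y 1 (by norm_num) (by norm_num)
  have hcauchy : ∀ y : ℕ → Fin 2, ∃ Ly : ℝ, Tendsto (fun n => Tm n y 1) atTop (𝓝 Ly) := by
    intro y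
    have hb0 : Tendsto (fun N : ℕ => 2 / (N + 1 : ℝ)) atTop (𝓝 0) :=
      tendsto_const_nhds.div_atTop
        (tendsto_atTop_add_const_right _ 1 tendsto_natCast_atTop_atTop)
    have hc : CauchySeq (fun n => Tm n y 1) := by
      apply cauchySeq_of_le_tendsto_0 (fun N : ℕ => 2 / ((N:ℝ) + 1)) _ hb0
      intro n m N hn hm
      rw [Real.dist_eq]
      rcases Nat.eq_zero_or_pos N with hN | hN
      · subst hN
        norm_num
        rw [abs_sub_le_iff]
        have h1 := hrange n y; have h2 := hrange m y
        constructor <;> linarith [h1.1, h1.2, h2.1, h2.2]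
      · have hN1 : (1:ℝ) ≤ N := by exact_mod_cast hN
        have key : |Tm n y 1 - Tm m y 1| ≤ 1 / N := by
          rcases le_total n m with h | h
          · rw [abs_sub_comm]
            refine le_trans (t_bound n m (by omega) h y) ?_
            apply one_div_le_one_div_of_le (by exact_mod_cast hN) (by exact_mod_cast hn)
          · refine le_trans (t_bound m n (by omega) h y) ?_
            apply one_div_le_one_div_of_le (by exact_mod_cast hN) (by exact_mod_cast hm)
        refine le_trans key ?_
        rw [div_le_div_iff₀ (by positivity) (by positivity)]
        nlinarith
    exact cauchySeq_tendsto_of_complete hc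
  choose L hL using hcauchy
  have hL0 : ∀ y, 0 ≤ L y := fun y =>
    ge_of_tendsto (hL y) (Eventually.of_forall fun n => (hrange n y).1)
  have hLle : ∀ (y) (n : ℕ), 1 ≤ n → |L y - Tm n y 1| ≤ 1 / n := by
    intro y n hn
    have htd : Tendsto (fun m => |Tm m y 1 - Tm n y 1|) atTop (𝓝 |L y - Tm n y 1|) :=
      ((hL y).sub tendsto_const_nhds).abs
    apply le_of_tendsto htd
    filter_upwards [eventually_ge_atTop n] with m hm
    exact t_bound n m hn hm y
  refine ⟨fun y i => if i = 2 then L y / (2 + L y) else 1 / (2 + L y), ?_, ?_⟩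
  · intro y
    have h0 := hL0 y
    have h2 : (0:ℝ) < 2 + L y := by linarith
    constructor
    · intro i
      by_cases hi : i = 2
      · simp only [hi, if_true]; positivity
      · simp only [if_neg hi]; positivity
    · rw [Fin.sum_univ_three]
      simp only [if_neg (by decide : ¬((0:Fin 3) = 2)),
        if_neg (by decide : ¬((1:Fin 3) = 2)), if_pos rfl]
      field_simp
      norm_num
      rw [mul_div_assoc', mul_div_cancel_left₀ _ (ne_of_gt h2)]
  · rw [Metric.tendstoUniformly_iff]
    intro ε hε
    obtain ⟨N, hN⟩ := exists_nat_one_div_lt hε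
    filter_upwards [eventually_ge_atTop (N + 1)] with n hn y
    have hn1 : 1 ≤ n := by omega
    have hb := hLle y n hn1
    have hdist : dist ((fun y i => if i = (2:Fin 3) then L y / (2 + L y) else 1 / (2 + L y)) y)
        (nrm (wordProd kamaeA y n *ᵥ fun _ => (1:ℝ))) ≤ 1 / n := by
      rw [nrm_key, dist_pi_le_iff (by positivity)]
      intro i
      have hc := coord_bound (L y) (Tm n y 1) (hL0 y) (hrange n y).1
      by_cases hi : i = 2
      · simp only [hi, if_true]
        rw [Real.dist_eq]
        exact le_trans hc.2 hb
      · simp only [if_neg hi]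
        rw [Real.dist_eq]
        exact le_trans hc.1 hb
    refine lt_of_le_of_lt hdist (lt_of_le_of_lt ?_ hN)
    apply one_div_le_one_div_of_le (by positivity)
    have : (N:ℝ) + 1 ≤ n := by exact_mod_cast hn
    linarith
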